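/- Let m ≥ 1, r ≥ 1, and let k : Fin m → ℕ be odd integers with 2r+1 ≤ k(i) for all i. In the m-dimensional r-nearest neighbor torus (the m-fold box product of the cycles C_{k(i)}^r), λ_{1,0,…,0} = 2r + 1 − sin((2r+1)π/k(1))/sin(π/k(1)) is an eigenvalue of the Laplacian matrix (with eigenvector v(x) = exp(2πi·x(1)/k(1))), λ_{(k(1)−1)/2,…,(k(m)−1)/2} = (2r+1)m − ∑_{i=1}^{m} sin((2r+1)π(k(i)−1)/(2k(i)))/sin(π(k(i)−1)/(2k(i))) is an eigenvalue (with eigenvector v(x) = exp(2πi·∑_i ((k(i)−1)/2)·x(i)/k(i))), and their quotient equals (2r + 1 − sin((2r+1)π/k(1))/sin(π/k(1))) / ((2r+1)m − ∑_{i=1}^{m} sin((2r+1)π(k(i)−1)/(2k(i)))/sin(π(k(i)−1)/(2k(i)))). -/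

import Mathlib

open Real Complex SimpleGraph Matrix Finset

/-- The `r`-nearest neighbor cycle `C_n^r` on `ZMod n`: distinct vertices `a, b` are adjacent
iff `a - b ≡ s (mod n)` for some `s ∈ {1,…,r} ∪ {n-r,…,n-1}`, i.e. iff `a - b = s` or
`b - a = s` in `ZMod n` for some `1 ≤ s ≤ r`. -/
def nnCycle (n r : ℕ) : SimpleGraph (ZMod n) where
  Adj a b := a ≠ b ∧ ∃ s ∈ Finset.Icc 1 r, a - b = (s : ZMod n) ∨ b - a = (s : ZMod n)
  symm := ⟨by
    rintro a b ⟨hne, s, hs, h⟩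
    exact ⟨hne.symm, s, hs, h.symm⟩⟩
  loopless := ⟨by rintro a ⟨h, -⟩; exact h rfl⟩

instance nnCycle.adjDecidable (n r : ℕ) : DecidableRel (nnCycle n r).Adj := fun a b =>
  inferInstanceAs (Decidable (a ≠ b ∧ ∃ s ∈ Finset.Icc 1 r,
    a - b = (s : ZMod n) ∨ b - a = (s : ZMod n)))

/-- The `m`-dimensional `r`-nearest neighbor torus: the `m`-fold Cartesian (box) product of
the cycles `C_{k i}^r`. Two tuples are adjacent iff they agree in all but one coordinate and
differ in that coordinate by an edge of the corresponding cycle. -/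
def nnTorus (m r : ℕ) (k : Fin m → ℕ) : SimpleGraph ((i : Fin m) → ZMod (k i)) where
  Adj x y := ∃ i, (∀ l, l ≠ i → x l = y l) ∧ (nnCycle (k i) r).Adj (x i) (y i)
  symm := ⟨by
    rintro x y ⟨i, h1, h2⟩
    exact ⟨i, fun l hl => (h1 l hl).symm, (nnCycle (k i) r).symm.symm _ _ h2⟩⟩
  loopless := ⟨by
    rintro x ⟨i, -, h2⟩
    exact (nnCycle (k i) r).loopless.irrefl _ h2⟩

instance nnTorus.adjDecidable (m r : ℕ) (k : Fin m → ℕ) :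
    DecidableRel (nnTorus m r k).Adj := fun x y =>
  inferInstanceAs (Decidable (∃ i, (∀ l, l ≠ i → x l = y l) ∧
    (nnCycle (k i) r).Adj (x i) (y i)))

lemma pow_mod_eq' {e : ℂ} {n : ℕ} (h : e ^ n = 1) (p : ℕ) : e ^ (p % n) = e ^ p := by
  conv_rhs => rw [← Nat.div_add_mod p n]
  rw [pow_add, pow_mul, h, one_pow, one_mul]

lemma dirichlet_mul (r : ℕ) (β : ℝ) :
    (∑ s ∈ Finset.Icc 1 r, 2 * Real.cos (2 * s * β)) * Real.sin β
      = Real.sin ((2 * r + 1) * β) - Real.sin β := by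
  induction r with
  | zero => simp
  | succ n ih =>
    rw [Finset.sum_Icc_succ_top (by omega)]
    have h := Real.sin_sub_sin ((2 * (n+1 : ℕ) + 1) * β) ((2 * (n : ℕ) + 1) * β)
    have e1 : ((2 * (n+1 : ℕ) + 1) * β - (2 * (n : ℕ) + 1) * β) / 2 = β := by push_cast; ring
    have e2 : ((2 * (n+1 : ℕ) + 1) * β + (2 * (n : ℕ) + 1) * β) / 2 = 2 * ((n:ℝ)+1) * β := by
      push_cast; ring
    rw [e1, e2] at h
    push_cast at h ih ⊢
    nlinarith [h, ih]

lemma dirichlet (r : ℕ) (β : ℝ) (hβ : Real.sin β ≠ 0) :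
    ∑ s ∈ Finset.Icc 1 r, (2 - 2 * Real.cos (2 * s * β))
      = 2 * r + 1 - Real.sin ((2 * r + 1) * β) / Real.sin β := by
  have h := dirichlet_mul r β
  have h2 : ∑ s ∈ Finset.Icc 1 r, (2 - 2 * Real.cos (2 * s * β))
      = 2 * r - ∑ s ∈ Finset.Icc 1 r, 2 * Real.cos (2 * s * β) := by
    rw [Finset.sum_sub_distrib, Finset.sum_const, Nat.card_Icc]
    push_cast; ring
  rw [h2]
  field_simp
  nlinarith [h, show Real.sin (β * (2 * (r : ℝ) + 1)) = Real.sin ((2 * r + 1) * β) by rw [mul_comm]]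

noncomputable def Ew (n θ : ℕ) : ℂ := Complex.exp (2 * Real.pi * Complex.I * θ / n)

lemma Ew_pow_self (n θ : ℕ) (hn : n ≠ 0) : Ew n θ ^ n = 1 := by
  rw [Ew, ← Complex.exp_nat_mul]
  have : (n : ℂ) * (2 * Real.pi * Complex.I * θ / n) = θ * (2 * Real.pi * Complex.I) := by
    have : (n:ℂ) ≠ 0 := Nat.cast_ne_zero.mpr hn
    field_simp
  rw [this, Complex.exp_nat_mul, Complex.exp_two_pi_mul_I, one_pow]

lemma Ew_val_add (n θ : ℕ) [NeZero n] (a b : ZMod n) :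
    Ew n θ ^ (a + b).val = Ew n θ ^ a.val * Ew n θ ^ b.val := by
  rw [ZMod.val_add, pow_mod_eq' (Ew_pow_self n θ (NeZero.ne n)), pow_add]

noncomputable def vchar (m : ℕ) (k : Fin m → ℕ) (θ : Fin m → ℕ) [∀ i, NeZero (k i)]
    (x : (i : Fin m) → ZMod (k i)) : ℂ :=
  Complex.exp (2 * Real.pi * Complex.I * ∑ i, (θ i : ℂ) * ((x i).val : ℂ) / (k i : ℂ))

lemma vchar_eq_prod (m : ℕ) (k : Fin m → ℕ) (θ : Fin m → ℕ) [∀ i, NeZero (k i)]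
    (x : (i : Fin m) → ZMod (k i)) :
    vchar m k θ x = ∏ i, Ew (k i) (θ i) ^ (x i).val := by
  rw [vchar, Finset.mul_sum, Complex.exp_sum]
  refine Finset.prod_congr rfl fun i _ => ?_
  rw [Ew, ← Complex.exp_nat_mul]
  congr 1
  ring

lemma vchar_update (m : ℕ) (k : Fin m → ℕ) (θ : Fin m → ℕ) [∀ i, NeZero (k i)]
    (x : (i : Fin m) → ZMod (k i)) (i : Fin m) (c : ZMod (k i)) :
    vchar m k θ (Function.update x i (x i + c)) = vchar m k θ x * Ew (k i) (θ i) ^ c.val := by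
  rw [vchar_eq_prod, vchar_eq_prod]
  have h1 : ∀ j, Ew (k j) (θ j) ^ ((Function.update x i (x i + c)) j).val
      = Function.update (fun j => Ew (k j) (θ j) ^ (x j).val) i
          (Ew (k i) (θ i) ^ (x i + c).val) j := fun j =>
    Function.apply_update (fun a (b : ZMod (k a)) => Ew (k a) (θ a) ^ b.val) x i (x i + c) j
  rw [Finset.prod_congr rfl fun j _ => h1 j, Finset.prod_update_of_mem (Finset.mem_univ i),
    Ew_val_add, ← Finset.prod_erase_mul Finset.univ _ (Finset.mem_univ i),
    Finset.sdiff_singleton_eq_erase]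
  ring

section ZModFacts

lemma zmod_val_cast {n r : ℕ} (hn : 2 * r + 1 ≤ n) {s : ℕ} (hs : s ∈ Finset.Icc 1 r) :
    ((s : ZMod n)).val = s :=
  ZMod.val_cast_of_lt (by have := (Finset.mem_Icc.mp hs).2; omega)

lemma zmod_cast_ne_zero {n r : ℕ} (hn : 2 * r + 1 ≤ n) {s : ℕ} (hs : s ∈ Finset.Icc 1 r) :
    (s : ZMod n) ≠ 0 := by
  intro h
  obtain ⟨c, hc⟩ := (ZMod.natCast_eq_zero_iff s n).mp h
  have h1 := (Finset.mem_Icc.mp hs).1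
  have h2 := (Finset.mem_Icc.mp hs).2
  rcases Nat.eq_zero_or_pos c with h' | h'
  · subst h'; simp at hc; omega
  · have : n ≤ n * c := Nat.le_mul_of_pos_right n h'
    omega

lemma zmod_cast_inj {n r : ℕ} (hn : 2 * r + 1 ≤ n) {s t : ℕ} (hs : s ∈ Finset.Icc 1 r)
    (ht : t ∈ Finset.Icc 1 r) (h : (s : ZMod n) = (t : ZMod n)) : s = t := by
  have hs' : ((s : ZMod n)).val = s := zmod_val_cast hn hs
  have ht' : ((t : ZMod n)).val = t := zmod_val_cast hn ht
  rw [← hs', ← ht', h]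

lemma zmod_cast_ne_neg {n r : ℕ} (hn : 2 * r + 1 ≤ n) {s t : ℕ} (hs : s ∈ Finset.Icc 1 r)
    (ht : t ∈ Finset.Icc 1 r) (h : (s : ZMod n) = -(t : ZMod n)) : False := by
  have h0 : ((s + t : ℕ) : ZMod n) = 0 := by push_cast; rw [h]; ring
  obtain ⟨c, hc⟩ := (ZMod.natCast_eq_zero_iff (s + t) n).mp h0
  have h1 := (Finset.mem_Icc.mp hs).1
  have h2 := (Finset.mem_Icc.mp hs).2
  have h3 := (Finset.mem_Icc.mp ht).1
  have h4 := (Finset.mem_Icc.mp ht).2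
  rcases Nat.eq_zero_or_pos c with h' | h'
  · subst h'; simp at hc; omega
  · have : n ≤ n * c := Nat.le_mul_of_pos_right n h'
    omega

end ZModFacts

section Nbhd

variable (m r : ℕ) (k : Fin m → ℕ)

/-- parametrization of the neighbors of `x` -/
def nbhdMap (x : (i : Fin m) → ZMod (k i)) (p : Fin m × ℕ × Bool) :
    (i : Fin m) → ZMod (k i) :=
  Function.update x p.1 (x p.1 + (if p.2.2 then (p.2.1 : ZMod (k p.1)) else -(p.2.1 : ZMod (k p.1))))

lemma neighborFinset_eq [∀ i, NeZero (k i)] (hk : ∀ i, 2 * r + 1 ≤ k i)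
    (x : (i : Fin m) → ZMod (k i)) :
    (nnTorus m r k).neighborFinset x
      = ((Finset.univ : Finset (Fin m)) ×ˢ (Finset.Icc 1 r ×ˢ (Finset.univ : Finset Bool))).image
          (nbhdMap m k x) := by
  ext y
  simp only [SimpleGraph.mem_neighborFinset, Finset.mem_image, Finset.mem_product,
    Finset.mem_univ, true_and, and_true]
  constructor
  · rintro ⟨i, hl, hne, s, hs, hcase⟩
    rcases hcase with h | h
    · refine ⟨⟨i, s, false⟩, hs, ?_⟩
      funext l
      by_cases hli : l = i
      · subst hli
        simp only [nbhdMap, Function.update_self, if_neg Bool.false_ne_true]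
        have : y l = x l - (s : ZMod (k l)) := by rw [← h]; ring
        rw [this]; ring
      · simp only [nbhdMap, Function.update_of_ne hli]
        exact hl l hli
    · refine ⟨⟨i, s, true⟩, hs, ?_⟩
      funext l
      by_cases hli : l = i
      · subst hli
        simp only [nbhdMap, Function.update_self, if_pos]
        have : y l = x l + (s : ZMod (k l)) := by rw [← h]; ring
        rw [this]
      · simp only [nbhdMap, Function.update_of_ne hli]
        exact hl l hli
  · rintro ⟨⟨i, s, b⟩, hs, rfl⟩
    refine ⟨i, fun l hl => (Function.update_of_ne hl _ x).symm, ?_, s, hs, ?_⟩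
    · simp only [nbhdMap, Function.update_self]
      intro h
      have hc0 := (left_eq_add.mp h)
      cases b
      · rw [if_neg Bool.false_ne_true, neg_eq_zero] at hc0
        exact zmod_cast_ne_zero (hk i) hs hc0
      · rw [if_pos rfl] at hc0
        exact zmod_cast_ne_zero (hk i) hs hc0
    · simp only [nbhdMap, Function.update_self]
      cases b
      · rw [if_neg Bool.false_ne_true]
        left; ring
      · rw [if_pos rfl]
        right; ring
end Nbhd

section Key
variable (m r : ℕ) (k : Fin m → ℕ)

lemma nbhdMap_injOn [∀ i, NeZero (k i)] (hk : ∀ i, 2 * r + 1 ≤ k i)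
    (x : (i : Fin m) → ZMod (k i)) :
    Set.InjOn (nbhdMap m k x)
      ((Finset.univ : Finset (Fin m)) ×ˢ (Finset.Icc 1 r ×ˢ (Finset.univ : Finset Bool))) := by
  rintro ⟨i, s, b⟩ hp ⟨i', s', b'⟩ hp' h
  simp only [Finset.coe_product, Set.mem_prod, Finset.mem_coe, Finset.mem_Icc,
    Set.mem_univ, true_and, and_true] at hp hp'
  have hs : s ∈ Finset.Icc 1 r := Finset.mem_Icc.mpr hp.2.1
  have hs' : s' ∈ Finset.Icc 1 r := Finset.mem_Icc.mpr hp'.2.1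
  -- first: i = i'
  have hii : i = i' := by
    by_contra hne
    have h1 := congrFun h i
    simp only [nbhdMap, Function.update_self, Function.update_of_ne hne] at h1
    have hc0 := (add_eq_left.mp h1)
    cases b
    · rw [if_neg Bool.false_ne_true, neg_eq_zero] at hc0
      exact zmod_cast_ne_zero (hk i) hs hc0
    · rw [if_pos rfl] at hc0
      exact zmod_cast_ne_zero (hk i) hs hc0
  subst hii
  have h1 := congrFun h i
  simp only [nbhdMap, Function.update_self] at h1
  have h2 := add_left_cancel h1
  cases b <;> cases b' <;>
    simp only [if_pos rfl, if_neg Bool.false_ne_true, neg_inj] at h2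
  · exact Prod.ext rfl (Prod.ext (zmod_cast_inj (hk i) hs hs' h2) rfl)
  · exact absurd h2.symm (fun hh => zmod_cast_ne_neg (hk i) hs' hs hh)
  · exact absurd h2 (fun hh => zmod_cast_ne_neg (hk i) hs hs' hh)
  · exact Prod.ext rfl (Prod.ext (zmod_cast_inj (hk i) hs hs' h2) rfl)

lemma key (hk : ∀ i, 2 * r + 1 ≤ k i) (θ : Fin m → ℕ) [∀ i, NeZero (k i)] :
    (nnTorus m r k).lapMatrix ℂ *ᵥ vchar m k θ =
      (((∑ i, ∑ s ∈ Finset.Icc 1 r,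
          (2 - 2 * Real.cos (2 * Real.pi * θ i * s / k i)) : ℝ)) : ℂ) • vchar m k θ := by
  funext x
  rw [SimpleGraph.lapMatrix_mulVec_apply]
  have hdeg : ((nnTorus m r k).degree x : ℂ) * vchar m k θ x
      = ∑ u ∈ (nnTorus m r k).neighborFinset x, vchar m k θ x := by
    rw [Finset.sum_const, ← SimpleGraph.card_neighborFinset_eq_degree, nsmul_eq_mul]
  rw [hdeg, ← Finset.sum_sub_distrib, neighborFinset_eq m r k hk x,
    Finset.sum_image (fun p hp q hq hpq => nbhdMap_injOn m r k hk x (by simpa using hp) (by simpa using hq) hpq)]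
  rw [Finset.sum_product, Pi.smul_apply, smul_eq_mul]
  have hterm : ∀ i, ∀ s ∈ Finset.Icc 1 r, ∀ b : Bool,
      vchar m k θ x - vchar m k θ (nbhdMap m k x (i, s, b))
        = vchar m k θ x * (1 - (if b then Ew (k i) (θ i) ^ s
            else (Ew (k i) (θ i) ^ s)⁻¹)) := by
    intro i s hs b
    have hval : ((s : ZMod (k i))).val = s := zmod_val_cast (hk i) hs
    cases b
    · rw [show nbhdMap m k x (i, s, false)
          = Function.update x i (x i + -(s : ZMod (k i))) from rfl,
        show (if (false : Bool) = true then Ew (k i) (θ i) ^ s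
          else (Ew (k i) (θ i) ^ s)⁻¹) = (Ew (k i) (θ i) ^ s)⁻¹ from rfl]
      rw [vchar_update]
      have hinv : Ew (k i) (θ i) ^ ((-(s : ZMod (k i))).val) = (Ew (k i) (θ i) ^ s)⁻¹ := by
        have := Ew_val_add (k i) (θ i) (-(s : ZMod (k i))) (s : ZMod (k i))
        rw [neg_add_cancel, ZMod.val_zero, pow_zero, hval] at this
        exact eq_inv_of_mul_eq_one_left this.symm
      rw [hinv]; ring
    · rw [show nbhdMap m k x (i, s, true)
          = Function.update x i (x i + (s : ZMod (k i))) from rfl,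
        show (if (true : Bool) = true then Ew (k i) (θ i) ^ s
          else (Ew (k i) (θ i) ^ s)⁻¹) = Ew (k i) (θ i) ^ s from rfl]
      rw [vchar_update, hval]
      ring
  have hsum : ∀ i, ∑ p ∈ Finset.Icc 1 r ×ˢ (Finset.univ : Finset Bool),
      (vchar m k θ x - vchar m k θ (nbhdMap m k x (i, p.1, p.2)))
        = ∑ s ∈ Finset.Icc 1 r,
            vchar m k θ x * (2 - Ew (k i) (θ i) ^ s - (Ew (k i) (θ i) ^ s)⁻¹) := by
    intro i
    rw [Finset.sum_product]
    refine Finset.sum_congr rfl fun s hs => ?_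
    rw [Fintype.sum_bool, hterm i s hs true, hterm i s hs false,
      show (if (true : Bool) = true then Ew (k i) (θ i) ^ s
        else (Ew (k i) (θ i) ^ s)⁻¹) = Ew (k i) (θ i) ^ s from rfl,
      show (if (false : Bool) = true then Ew (k i) (θ i) ^ s
        else (Ew (k i) (θ i) ^ s)⁻¹) = (Ew (k i) (θ i) ^ s)⁻¹ from rfl]
    ring
  rw [Finset.sum_congr rfl fun i _ => hsum i]
  have hEs : ∀ i, ∀ s ∈ Finset.Icc 1 r,
      2 - Ew (k i) (θ i) ^ s - (Ew (k i) (θ i) ^ s)⁻¹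
        = ((2 - 2 * Real.cos (2 * Real.pi * θ i * s / k i) : ℝ) : ℂ) := by
    intro i s hs
    have hki : (k i : ℂ) ≠ 0 := Nat.cast_ne_zero.mpr (by have := hk i; omega)
    have hE : Ew (k i) (θ i) ^ s
        = Complex.exp (((2 * Real.pi * θ i * s / k i : ℝ) : ℂ) * Complex.I) := by
      rw [Ew, ← Complex.exp_nat_mul]
      congr 1
      push_cast
      field_simp
    rw [hE, ← Complex.exp_neg, Complex.exp_mul_I, ← neg_mul, Complex.exp_mul_I]
    push_cast [Complex.cos_neg, Complex.sin_neg]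
    ring
  rw [Finset.sum_congr rfl fun i _ => Finset.sum_congr rfl fun s hs =>
    by rw [hEs i s hs]]
  push_cast
  rw [Finset.sum_mul]
  refine Finset.sum_congr rfl fun i _ => ?_
  rw [Finset.sum_mul]
  exact Finset.sum_congr rfl fun s _ => mul_comm _ _

end Key

/-- For `m, r ≥ 1` and odd `k i` with `2r+1 ≤ k i`: in the `m`-dimensional `r`-nearest
neighbor torus, `λ_{1,0,…,0} = 2r+1 - sin((2r+1)π/k₁)/sin(π/k₁)` is an eigenvalue of the
Laplacian (eigenvector `v(x) = exp(2πix₁/k₁)`),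
`λ_{(k₁-1)/2,…,(k_m-1)/2} = (2r+1)m - ∑ᵢ sin((2r+1)π(kᵢ-1)/(2kᵢ))/sin(π(kᵢ-1)/(2kᵢ))` is an
eigenvalue (eigenvector `v(x) = exp(2πi·∑ᵢ ((kᵢ-1)/2)xᵢ/kᵢ)`), and their quotient equals the
stated expression. -/
theorem multitorus_synchronizability_odd (m r : ℕ) (hm : 1 ≤ m) (hr : 1 ≤ r)
    (k : Fin m → ℕ) (hko : ∀ i, Odd (k i)) (hk : ∀ i, 2 * r + 1 ≤ k i) :
    haveI : ∀ i, NeZero (k i) := fun i => ⟨by have := hk i; omega⟩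
    ((nnTorus m r k).lapMatrix ℂ *ᵥ
        (fun x => Complex.exp (2 * Real.pi * Complex.I * (x ⟨0, hm⟩).val / k ⟨0, hm⟩)) =
      ((2 * r + 1 - Real.sin ((2 * r + 1) * Real.pi / k ⟨0, hm⟩) /
          Real.sin (Real.pi / k ⟨0, hm⟩) : ℝ) : ℂ) •
        (fun x => Complex.exp (2 * Real.pi * Complex.I * (x ⟨0, hm⟩).val / k ⟨0, hm⟩))) ∧
    ((nnTorus m r k).lapMatrix ℂ *ᵥ
        (fun x => Complex.exp (2 * Real.pi * Complex.I *
          ∑ i, (((k i - 1) / 2 : ℕ) : ℂ) * ((x i).val : ℂ) / (k i : ℂ))) =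
      (((2 * r + 1) * m - ∑ i, Real.sin ((2 * r + 1) * Real.pi * ((k i : ℝ) - 1) / (2 * k i)) /
          Real.sin (Real.pi * ((k i : ℝ) - 1) / (2 * k i)) : ℝ) : ℂ) •
        (fun x => Complex.exp (2 * Real.pi * Complex.I *
          ∑ i, (((k i - 1) / 2 : ℕ) : ℂ) * ((x i).val : ℂ) / (k i : ℂ)))) ∧
    (2 * (r : ℝ) + 1 - Real.sin ((2 * r + 1) * Real.pi / k ⟨0, hm⟩) /
        Real.sin (Real.pi / k ⟨0, hm⟩)) /
      ((2 * r + 1) * m - ∑ i, Real.sin ((2 * r + 1) * Real.pi * ((k i : ℝ) - 1) / (2 * k i)) /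
          Real.sin (Real.pi * ((k i : ℝ) - 1) / (2 * k i))) =
      (2 * r + 1 - Real.sin ((2 * r + 1) * Real.pi / k ⟨0, hm⟩) /
        Real.sin (Real.pi / k ⟨0, hm⟩)) /
      ((2 * r + 1) * m - ∑ i, Real.sin ((2 * r + 1) * Real.pi * ((k i : ℝ) - 1) / (2 * k i)) /
          Real.sin (Real.pi * ((k i : ℝ) - 1) / (2 * k i))) := by
  haveI : ∀ i, NeZero (k i) := fun i => ⟨by have := hk i; omega⟩
  set i0 : Fin m := ⟨0, hm⟩
  have hkpos : ∀ i, (0 : ℝ) < k i := fun i => by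
    have := hk i; exact_mod_cast (by omega : 0 < k i)
  refine ⟨?_, ?_, rfl⟩
  · -- first eigenvector
    set θ₁ : Fin m → ℕ := fun i => if i = i0 then 1 else 0 with hθ₁
    have h := key m r k hk θ₁
    have hv : vchar m k θ₁ = fun x =>
        Complex.exp (2 * Real.pi * Complex.I * (x i0).val / k i0) := by
      funext x
      rw [vchar]
      congr 1
      have hsum : ∑ i, (θ₁ i : ℂ) * ((x i).val : ℂ) / (k i : ℂ)
          = ((x i0).val : ℂ) / (k i0 : ℂ) := by
        rw [show (∑ i, (θ₁ i : ℂ) * ((x i).val : ℂ) / (k i : ℂ))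
            = ∑ i, (if i = i0 then ((x i).val : ℂ) / (k i : ℂ) else 0) from
          Finset.sum_congr rfl fun i _ => by
            by_cases hi : i = i0 <;> simp [hθ₁, hi]]
        rw [Finset.sum_ite_eq' Finset.univ i0 (fun i => ((x i).val : ℂ) / (k i : ℂ))]
        simp
      rw [hsum]
      ring
    have hsin : Real.sin (Real.pi / k i0) ≠ 0 := by
      refine ne_of_gt (Real.sin_pos_of_pos_of_lt_pi ?_ ?_)
      · exact div_pos Real.pi_pos (hkpos i0)
      · exact div_lt_self Real.pi_pos (by have := hk i0; norm_num; exact_mod_cast by omega)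
    have hval : (∑ i, ∑ s ∈ Finset.Icc 1 r,
        (2 - 2 * Real.cos (2 * Real.pi * θ₁ i * s / k i)) : ℝ)
        = 2 * r + 1 - Real.sin ((2 * r + 1) * Real.pi / k i0) / Real.sin (Real.pi / k i0) := by
      rw [Finset.sum_eq_single i0]
      · have harg : ∀ s : ℕ, 2 * Real.pi * (θ₁ i0 : ℝ) * s / k i0
            = 2 * s * (Real.pi / k i0) := by
          intro s
          simp only [hθ₁, if_pos rfl]
          push_cast
          ring
        rw [Finset.sum_congr rfl fun s _ => by rw [harg s], dirichlet r _ hsin]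
        congr 2
        ring
      · intro i _ hi
        apply Finset.sum_eq_zero
        intro s _
        simp [hθ₁, if_neg hi]
      · intro h'
        exact absurd (Finset.mem_univ i0) h'
    rw [hv, hval] at h
    exact h
  · -- second eigenvector
    set θ₂ : Fin m → ℕ := fun i => (k i - 1) / 2 with hθ₂
    have h := key m r k hk θ₂
    have hv : vchar m k θ₂ = fun x => Complex.exp (2 * Real.pi * Complex.I *
        ∑ i, (((k i - 1) / 2 : ℕ) : ℂ) * ((x i).val : ℂ) / (k i : ℂ)) := rfl
    have hbeta : ∀ i, Real.pi * (θ₂ i : ℝ) / k i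
        = Real.pi * ((k i : ℝ) - 1) / (2 * k i) := by
      intro i
      obtain ⟨j, hj⟩ := hko i
      have hθ : θ₂ i = j := by simp only [hθ₂]; omega
      have hkr : (k i : ℝ) = 2 * j + 1 := by rw [hj]; push_cast; ring
      rw [hθ, hkr]
      have : (2 * (j : ℝ) + 1) ≠ 0 := by positivity
      field_simp
      ring
    have hsin : ∀ i, Real.sin (Real.pi * (θ₂ i : ℝ) / k i) ≠ 0 := by
      intro i
      refine ne_of_gt (Real.sin_pos_of_pos_of_lt_pi ?_ ?_)
      · have hθpos : (0 : ℝ) < θ₂ i := by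
          have : 1 ≤ θ₂ i := by simp only [hθ₂]; have := hk i; omega
          exact_mod_cast Nat.lt_of_lt_of_le Nat.zero_lt_one this
        exact div_pos (mul_pos Real.pi_pos hθpos) (hkpos i)
      · have hθk : (θ₂ i : ℝ) / k i < 1 := by
          rw [div_lt_one (hkpos i)]
          have : θ₂ i < k i := by simp only [hθ₂]; have := hk i; omega
          exact_mod_cast this
        rw [mul_div_assoc]
        exact mul_lt_of_lt_one_right Real.pi_pos hθk
    have hval : (∑ i, ∑ s ∈ Finset.Icc 1 r,
        (2 - 2 * Real.cos (2 * Real.pi * θ₂ i * s / k i)) : ℝ)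
        = (2 * r + 1) * m - ∑ i, Real.sin ((2 * r + 1) * Real.pi * ((k i : ℝ) - 1) / (2 * k i)) /
            Real.sin (Real.pi * ((k i : ℝ) - 1) / (2 * k i)) := by
      have hinner : ∀ i, (∑ s ∈ Finset.Icc 1 r,
          (2 - 2 * Real.cos (2 * Real.pi * θ₂ i * s / k i)) : ℝ)
          = 2 * r + 1 - Real.sin ((2 * r + 1) * Real.pi * ((k i : ℝ) - 1) / (2 * k i)) /
              Real.sin (Real.pi * ((k i : ℝ) - 1) / (2 * k i)) := by
        intro i
        have harg : ∀ s : ℕ, 2 * Real.pi * (θ₂ i : ℝ) * s / k i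
            = 2 * s * (Real.pi * (θ₂ i : ℝ) / k i) := by intro s; ring
        rw [Finset.sum_congr rfl fun s _ => by rw [harg s],
          dirichlet r _ (hsin i), hbeta i]
        congr 2
        ring
      rw [Finset.sum_congr rfl fun i _ => hinner i, Finset.sum_sub_distrib,
        Finset.sum_const, Finset.card_univ, Fintype.card_fin, nsmul_eq_mul]
      ring
    rw [hv, hval] at h
    exact h
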